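/- With t = r(r⁶ - 9r⁴s² - 9r²s⁴ - 3s⁶)/(5r⁶ + 3r⁴s² + 3r²s⁴ + s⁶) and x = s²(r² + s²)/r², the quantity ψ(s, t, x) = x(s² - x)t⁴ + 2s⁴t²x + s²(s⁴ + s²x + x²)x is the square of a rational number. -/
import Mathlib

theorem psi_square (r s : ℚ) (hr : r ≠ 0)
    (hC : 5 * r ^ 6 + 3 * r ^ 4 * s ^ 2 + 3 * r ^ 2 * s ^ 4 + s ^ 6 ≠ 0) :
    let t := r * (r ^ 6 - 9 * r ^ 4 * s ^ 2 - 9 * r ^ 2 * s ^ 4 - 3 * s ^ 6) /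
      (5 * r ^ 6 + 3 * r ^ 4 * s ^ 2 + 3 * r ^ 2 * s ^ 4 + s ^ 6)
    let x := s ^ 2 * (r ^ 2 + s ^ 2) / r ^ 2
    ∃ w : ℚ, x * (s ^ 2 - x) * t ^ 4 + 2 * s ^ 4 * t ^ 2 * x +
      s ^ 2 * (s ^ 4 + s ^ 2 * x + x ^ 2) * x = w ^ 2 := by
  intro t x
  refine ⟨(7 * r ^ 17 * s ^ 3 + 80 * r ^ 15 * s ^ 5 + 196 * r ^ 13 * s ^ 7 +
      184 * r ^ 11 * s ^ 9 + 50 * r ^ 9 * s ^ 11 - 32 * r ^ 7 * s ^ 13 -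
      28 * r ^ 5 * s ^ 15 - 8 * r ^ 3 * s ^ 17 - r * s ^ 19) /
      (r ^ 4 * (5 * r ^ 6 + 3 * r ^ 4 * s ^ 2 + 3 * r ^ 2 * s ^ 4 + s ^ 6) ^ 2), ?_⟩
  simp only [t, x]
  field_simp
  ring
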